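/- arXiv:1907.00947 — 8 statements merged into one kernel-verified Lean document; each statement's English description precedes it below -/
import Mathlib

section
/- A module M is idempotent-liftable if and only if M is π-projective. -/
/-- A module is automorphism-liftable if every automorphism of any factor module
lifts to an endomorphism of the module along the natural projection. -/
def AutLiftable (R M : Type*) [Ring R] [AddCommGroup M] [Module R M] : Prop :=
  ∀ (N : Submodule R M) (fbar : (M ⧸ N) ≃ₗ[R] (M ⧸ N)),
    ∃ f : M →ₗ[R] M, (fbar : (M ⧸ N) →ₗ[R] (M ⧸ N)) ∘ₗ N.mkQ = N.mkQ ∘ₗ f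

/-- A module is endomorphism-liftable if every endomorphism of any factor module
lifts to an endomorphism of the module along the natural projection. -/
def EndLiftable (R M : Type*) [Ring R] [AddCommGroup M] [Module R M] : Prop :=
  ∀ (N : Submodule R M) (fbar : (M ⧸ N) →ₗ[R] (M ⧸ N)),
    ∃ f : M →ₗ[R] M, fbar ∘ₗ N.mkQ = N.mkQ ∘ₗ f

/-- A module is idempotent-liftable if every idempotent endomorphism of any factor
module lifts to an endomorphism of the module along the natural projection. -/
def IdemLiftable (R M : Type*) [Ring R] [AddCommGroup M] [Module R M] : Prop :=
  ∀ (N : Submodule R M) (fbar : (M ⧸ N) →ₗ[R] (M ⧸ N)), fbar ∘ₗ fbar = fbar →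
    ∃ f : M →ₗ[R] M, fbar ∘ₗ N.mkQ = N.mkQ ∘ₗ f

/-- A module is strongly automorphism-liftable if every automorphism of any factor
module lifts to an automorphism of the module along the natural projection. -/
def StrongAutLiftable (R M : Type*) [Ring R] [AddCommGroup M] [Module R M] : Prop :=
  ∀ (N : Submodule R M) (fbar : (M ⧸ N) ≃ₗ[R] (M ⧸ N)),
    ∃ f : M ≃ₗ[R] M, (fbar : (M ⧸ N) →ₗ[R] (M ⧸ N)) ∘ₗ N.mkQ
      = N.mkQ ∘ₗ (f : M →ₗ[R] M)

/-- A module is π-projective if whenever `X + Y = M` there are endomorphisms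
`f`, `g` with `f + g = 1`, `range f ≤ X` and `range g ≤ Y`. -/
def PiProjective (R M : Type*) [Ring R] [AddCommGroup M] [Module R M] : Prop :=
  ∀ X Y : Submodule R M, X ⊔ Y = ⊤ →
    ∃ f g : M →ₗ[R] M, f + g = LinearMap.id ∧
      LinearMap.range f ≤ X ∧ LinearMap.range g ≤ Y

/-- A module is quasi-projective if every homomorphism to a factor module lifts
to an endomorphism along the natural projection. -/
def QuasiProjective (R M : Type*) [Ring R] [AddCommGroup M] [Module R M] : Prop :=
  ∀ (N : Submodule R M) (fbar : M →ₗ[R] M ⧸ N),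
    ∃ f : M →ₗ[R] M, N.mkQ ∘ₗ f = fbar

/-- A module is idempotent-liftable iff it is π-projective. -/
theorem idemLiftable_iff_piProjective
    (R M : Type*) [Ring R] [AddCommGroup M] [Module R M] :
    IdemLiftable R M ↔ PiProjective R M := by
  constructor
  · intro hIL X Y hXY
    set N : Submodule R M := X ⊓ Y with hN
    have hNX : N ≤ X := inf_le_left
    have hNY : N ≤ Y := inf_le_right
    set X' : Submodule R (M ⧸ N) := X.map N.mkQ with hX'
    set Y' : Submodule R (M ⧸ N) := Y.map N.mkQ with hY'
    have hcompl : IsCompl X' Y' := by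
      constructor
      · rw [disjoint_iff_inf_le]
        rintro z ⟨hz1, hz2⟩
        obtain ⟨x, hx, rfl⟩ := hz1
        obtain ⟨y, hy, hxy⟩ := hz2
        have hxy' : y - x ∈ N := (Submodule.Quotient.eq N).mp hxy
        have hxYmem : x ∈ Y := by
          have : x = y - (y - x) := by abel
          rw [this]
          exact Submodule.sub_mem Y hy (hNY hxy')
        have hxn : x ∈ N := ⟨hx, hxYmem⟩
        simpa [Submodule.Quotient.mk_eq_zero] using hxn
      · rw [codisjoint_iff, ← Submodule.map_sup, hXY, Submodule.map_top,
          Submodule.range_mkQ]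
    set fbar : (M ⧸ N) →ₗ[R] (M ⧸ N) :=
      X'.subtype ∘ₗ Submodule.projectionOnto X' Y' hcompl with hfbardef
    have hidem : fbar ∘ₗ fbar = fbar := by
      ext z
      simp only [LinearMap.comp_apply, hfbardef, Submodule.subtype_apply]
      rw [Submodule.projectionOnto_apply_left]
    obtain ⟨f, hf⟩ := hIL N fbar hidem
    refine ⟨f, LinearMap.id - f, by abel, ?_, ?_⟩
    · rintro _ ⟨m, rfl⟩
      have h1 : N.mkQ (f m) = fbar (N.mkQ m) := by
        have := LinearMap.ext_iff.mp hf m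
        simpa using this.symm
      have h2 : N.mkQ (f m) ∈ X' := by
        rw [h1, hfbardef]
        exact (Submodule.projectionOnto X' Y' hcompl (N.mkQ m)).2
      obtain ⟨x, hx, hx2⟩ := h2
      have : f m - x ∈ N := by
        rw [← Submodule.Quotient.eq N] at *
        exact hx2.symm
      have : f m = x + (f m - x) := by abel
      rw [this]
      exact Submodule.add_mem X hx (hNX ‹f m - x ∈ N›)
    · rintro _ ⟨m, rfl⟩
      simp only [LinearMap.sub_apply, LinearMap.id_apply]
      have h1 : N.mkQ (f m) = fbar (N.mkQ m) := by
        have := LinearMap.ext_iff.mp hf m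
        simpa using this.symm
      have h2 : N.mkQ (m - f m) ∈ Y' := by
        rw [map_sub, h1]
        obtain ⟨a, b, ha, hb, hab⟩ :=
          Submodule.codisjoint_iff_exists_add_eq.mp hcompl.codisjoint (N.mkQ m)
        have hfa : fbar a = a := by
          have h := Submodule.projectionOnto_apply_left hcompl ⟨a, ha⟩
          simp only [hfbardef, LinearMap.comp_apply, Submodule.subtype_apply]
          rw [show a = ((⟨a, ha⟩ : X') : M ⧸ N) from rfl, h]
        have hfb : fbar b = 0 := by
          have h := Submodule.projectionOnto_apply_right hcompl ⟨b, hb⟩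
          simp only [hfbardef, LinearMap.comp_apply, Submodule.subtype_apply]
          rw [show b = ((⟨b, hb⟩ : Y') : M ⧸ N) from rfl, h]
          rfl
        have hproj : fbar (N.mkQ m) = a := by
          rw [← hab, map_add, hfa, hfb, add_zero]
        rw [hproj, ← hab]
        simpa using hb
      obtain ⟨y, hy, hy2⟩ := h2
      have hmem : (m - f m) - y ∈ N := by
        rw [← Submodule.Quotient.eq N] at *
        exact hy2.symm
      have : m - f m = y + ((m - f m) - y) := by abel
      rw [this]
      exact Submodule.add_mem Y hy (hNY hmem)
  · intro hPP N fbar hidem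
    set X : Submodule R M := (LinearMap.range fbar).comap N.mkQ with hX
    set Y : Submodule R M := (LinearMap.ker fbar).comap N.mkQ with hY
    have hXY : X ⊔ Y = ⊤ := by
      rw [eq_top_iff]
      intro m _
      obtain ⟨a, ha⟩ := N.mkQ_surjective (fbar (N.mkQ m))
      have haX : a ∈ X := by
        rw [hX, Submodule.mem_comap, ha]
        exact ⟨N.mkQ m, rfl⟩
      have hmaY : m - a ∈ Y := by
        rw [hY, Submodule.mem_comap, LinearMap.mem_ker, map_sub, ha, map_sub]
        have := LinearMap.ext_iff.mp hidem (N.mkQ m)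
        simp only [LinearMap.comp_apply] at this
        rw [this]
        abel
      have : m = a + (m - a) := by abel
      rw [this]
      exact Submodule.add_mem_sup haX hmaY
    obtain ⟨f, g, hfg, hf, hg⟩ := hPP X Y hXY
    refine ⟨f, ?_⟩
    ext m
    simp only [LinearMap.comp_apply, Submodule.mkQ_apply]
    have h1 : N.mkQ (f m) ∈ LinearMap.range fbar := hf ⟨m, rfl⟩
    have h2 : fbar (N.mkQ (g m)) = 0 := hg ⟨m, rfl⟩
    have hfix : fbar (N.mkQ (f m)) = N.mkQ (f m) := by
      obtain ⟨z, hz⟩ := h1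
      rw [← hz]
      have := LinearMap.ext_iff.mp hidem z
      simpa using this
    have hm : m = f m + g m := by
      have := LinearMap.ext_iff.mp hfg m
      simpa using this.symm
    calc fbar (N.mkQ m) = fbar (N.mkQ (f m)) + fbar (N.mkQ (g m)) := by
          rw [← map_add, ← map_add, ← hm]
      _ = N.mkQ (f m) := by rw [hfix, h2, add_zero]
      _ = Submodule.Quotient.mk (f m) := rfl
end

section
/- If A is a ring in which 2 is invertible, then every automorphism-liftable right A-module is idempotent-liftable. -/
/-- Over a ring in which 2 is invertible, every automorphism-liftable module is
idempotent-liftable. -/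
theorem idemLiftable_of_autLiftable
    (R M : Type*) [Ring R] [AddCommGroup M] [Module R M]
    (h2 : IsUnit (2 : R)) (hM : AutLiftable R M) :
    IdemLiftable R M := by
  intro N e he
  -- the involution 1 - 2e
  set s : (M ⧸ N) →ₗ[R] (M ⧸ N) := LinearMap.id - (e + e) with hs
  have he' : ∀ x, e (e x) = e x := fun x => congrArg (· x) he
  have hss : s ∘ₗ s = LinearMap.id := by
    ext x
    simp only [hs, LinearMap.comp_apply, LinearMap.sub_apply, LinearMap.add_apply,
      LinearMap.id_apply, map_sub, map_add, he']
    abel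
  let E : (M ⧸ N) ≃ₗ[R] (M ⧸ N) := LinearEquiv.ofLinear s s hss hss
  obtain ⟨g, hg⟩ := hM N E
  have hgx : ∀ x : M, s (N.mkQ x) = N.mkQ (g x) := fun x => congrArg (· x) hg
  -- the central inverse of 2
  set v : R := ↑h2.unit⁻¹ with hv
  have h2c : ∀ r : R, (2 : R) * r = r * 2 := fun r => by rw [two_mul, mul_two]
  have hvc : ∀ r : R, v * r = r * v := by
    intro r
    have h1 : v * (2 : R) = 1 := by
      simpa [hv] using h2.unit.inv_mul
    have h2' : (2 : R) * v = 1 := by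
      simpa [hv] using h2.unit.mul_inv
    calc v * r = v * (r * ((2:R) * v)) := by rw [h2', mul_one]
      _ = v * (r * 2 * v) := by rw [mul_assoc r]
      _ = v * ((2:R) * r * v) := by rw [← h2c r]
      _ = v * 2 * (r * v) := by simp only [mul_assoc]
      _ = r * v := by rw [h1, one_mul]
  have hv2 : v * (2 : R) = 1 := by simpa [hv] using h2.unit.inv_mul
  -- scalar multiplication by v is R-linear since v is central
  let mvQ : (M ⧸ N) →ₗ[R] (M ⧸ N) :=
    { toFun := fun x => v • x
      map_add' := fun x y => smul_add v x y
      map_smul' := fun r x => by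
        simp only [RingHom.id_apply, smul_smul, hvc r] }
  let mv : M →ₗ[R] M :=
    { toFun := fun x => v • x
      map_add' := fun x y => smul_add v x y
      map_smul' := fun r x => by
        simp only [RingHom.id_apply, smul_smul, hvc r] }
  refine ⟨mv ∘ₗ (LinearMap.id - g), ?_⟩
  ext x
  simp only [LinearMap.comp_apply, LinearMap.sub_apply, LinearMap.id_apply]
  show e (N.mkQ x) = N.mkQ (v • (x - g x))
  have : N.mkQ (v • (x - g x)) = v • (N.mkQ x - N.mkQ (g x)) := by
    simp [map_sub, map_smul]
  rw [this, ← hgx x]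
  simp only [hs, LinearMap.sub_apply, LinearMap.add_apply, LinearMap.id_apply]
  have : N.mkQ x - (N.mkQ x - (e (N.mkQ x) + e (N.mkQ x))) = (2 : R) • e (N.mkQ x) := by
    rw [two_smul]; abel
  rw [this, smul_smul, hv2, one_smul]
end

section
/- Let M = ⊕_{i∈I} M_i be a direct sum of modules such that every submodule N of M satisfies N = ⊕_{i∈I} (N ∩ M_i). Then Hom(M_i, M_j) = 0 for all i ≠ j in I. -/
/-- If `M = ⊕ᵢ Mᵢ` and every submodule `N` satisfies `N = ⊕ᵢ (N ⊓ Mᵢ)`, then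
`Hom(Mᵢ, Mⱼ) = 0` for `i ≠ j`. -/
theorem hom_eq_zero_of_submodules_decompose
    (R M : Type*) [Ring R] [AddCommGroup M] [Module R M] {ι : Type*}
    (Mc : ι → Submodule R M)
    (hindep : iSupIndep Mc) (hsup : (⨆ i, Mc i) = ⊤)
    (hdec : ∀ N : Submodule R M, N = ⨆ i, N ⊓ Mc i) :
    ∀ i j : ι, i ≠ j → ∀ f : (Mc i) →ₗ[R] (Mc j), f = 0 := by
  intro i j hij f
  -- graph submodule
  set g : (Mc i) →ₗ[R] M := (Mc i).subtype + (Mc j).subtype ∘ₗ f with hg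
  set N : Submodule R M := LinearMap.range g with hNdef
  have hsupi : ∀ k, k ≠ i → Mc k ≤ ⨆ l, ⨆ _ : l ≠ i, Mc l := by
    intro k hk
    exact le_iSup₂ (f := fun l (_ : l ≠ i) => Mc l) k hk
  have hdisj := (hindep i).eq_bot
  have hzero : ∀ z : M, z ∈ Mc i → z ∈ (⨆ l, ⨆ _ : l ≠ i, Mc l) → z = 0 := by
    intro z h1 h2
    have : z ∈ Mc i ⊓ (⨆ l, ⨆ _ : l ≠ i, Mc l) := ⟨h1, h2⟩
    rw [hdisj] at this
    simpa using this
  have hN : N ≤ Mc i := by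
    conv_lhs => rw [hdec N]
    apply iSup_le
    intro k
    rintro y ⟨hyN, hyk⟩
    obtain ⟨x, rfl⟩ := hyN
    by_cases hk : k = i
    · subst hk; exact hyk
    · -- show x = 0
      have hx1 : (x : M) ∈ Mc i := x.2
      have hfx : ((f x : M)) ∈ (⨆ l, ⨆ _ : l ≠ i, Mc l) :=
        hsupi j (Ne.symm hij) (f x).2
      have hyk' : g x ∈ (⨆ l, ⨆ _ : l ≠ i, Mc l) := hsupi k hk hyk
      have hx2 : (x : M) ∈ (⨆ l, ⨆ _ : l ≠ i, Mc l) := by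
        have : (x : M) = g x - (f x : M) := by
          simp [hg, LinearMap.add_apply]
        rw [this]
        exact sub_mem hyk' hfx
      have hx0 : (x : M) = 0 := hzero _ hx1 hx2
      have : x = 0 := Subtype.ext hx0
      subst this
      simp [map_zero]
  -- conclude f = 0
  ext x
  have h1 : (x : M) + (f x : M) ∈ Mc i := hN ⟨x, rfl⟩
  have h2 : ((f x : M)) ∈ Mc i := by
    have : ((f x : M)) = ((x : M) + (f x : M)) - (x : M) := (add_sub_cancel_left _ _).symm
    rw [this]; exact sub_mem h1 x.2
  have h3 : ((f x : M)) ∈ (⨆ l, ⨆ _ : l ≠ i, Mc l) :=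
    hsupi j (Ne.symm hij) (f x).2
  have : ((f x : M)) = 0 := hzero _ h2 h3
  simpa using Subtype.ext this
end

section
/- Let M = ⊕_{i∈I} M_i be a direct sum of modules such that every submodule N of M satisfies N = ⊕_{i∈I} (N ∩ M_i). Then M is automorphism-liftable if and only if each M_i is automorphism-liftable. -/
section AutLiftAux

variable {R M : Type*} [Ring R] [AddCommGroup M] [Module R M] {ι : Type*}
variable (Mc : ι → Submodule R M)

lemma isCompl_aux (hindep : iSupIndep Mc) (hsup : (⨆ i, Mc i) = ⊤) (i : ι) :
    IsCompl (Mc i) (⨆ j, ⨆ _ : j ≠ i, Mc j) := by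
  constructor
  · exact hindep i
  · rw [codisjoint_iff, eq_top_iff, ← hsup]
    refine iSup_le fun j => ?_
    rcases eq_or_ne j i with rfl | hj
    · exact le_sup_left
    · exact le_sup_of_le_right (le_iSup_of_le j (le_iSup_of_le hj le_rfl))

variable (hindep : iSupIndep Mc) (hsup : (⨆ i, Mc i) = ⊤)

noncomputable def projAux (i : ι) : M →ₗ[R] Mc i :=
  Submodule.projectionOnto _ _ (isCompl_aux Mc hindep hsup i)

noncomputable def rhoAux (i : ι) : M →ₗ[R] M :=
  (Mc i).subtype ∘ₗ projAux Mc hindep hsup i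

lemma rhoAux_mem (i : ι) (x : M) : rhoAux Mc hindep hsup i x ∈ Mc i :=
  (projAux Mc hindep hsup i x).2

lemma rhoAux_of_mem {i : ι} {x : M} (hx : x ∈ Mc i) : rhoAux Mc hindep hsup i x = x := by
  have := Submodule.linearProjOfIsCompl_apply_left (isCompl_aux Mc hindep hsup i) ⟨x, hx⟩
  simpa [rhoAux, projAux] using congrArg (Submodule.subtype (Mc i)) this

lemma rhoAux_of_mem_ne {i j : ι} (hij : j ≠ i) {x : M} (hx : x ∈ Mc j) :
    rhoAux Mc hindep hsup i x = 0 := by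
  have hx' : x ∈ ⨆ k, ⨆ _ : k ≠ i, Mc k := Submodule.mem_iSup_of_mem j (Submodule.mem_iSup_of_mem hij hx)
  have := Submodule.projectionOnto_apply_of_mem_right (isCompl_aux Mc hindep hsup i) hx'
  simp [rhoAux, projAux, this]

lemma rhoAux_sum (x : M) : ∃ s : Finset ι, x = ∑ j ∈ s, rhoAux Mc hindep hsup j x := by
  have hx : x ∈ ⨆ i, Mc i := hsup ▸ Submodule.mem_top
  refine Submodule.iSup_induction Mc (motive := fun x => ∃ s : Finset ι, x = ∑ j ∈ s, rhoAux Mc hindep hsup j x) hx ?_ ?_ ?_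
  · intro i x hx
    refine ⟨{i}, ?_⟩
    simp [rhoAux_of_mem Mc hindep hsup hx]
  · exact ⟨∅, by simp⟩
  · classical
    rintro x y ⟨s, hs⟩ ⟨t, ht⟩
    have hxz : ∀ k ∉ s, rhoAux Mc hindep hsup k x = 0 := by
      intro k hk
      rw [hs, map_sum]
      refine Finset.sum_eq_zero fun j hj => ?_
      exact rhoAux_of_mem_ne Mc hindep hsup (by rintro rfl; exact hk hj)
        (rhoAux_mem Mc hindep hsup j x)
    have hyz : ∀ k ∉ t, rhoAux Mc hindep hsup k y = 0 := by
      intro k hk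
      rw [ht, map_sum]
      refine Finset.sum_eq_zero fun j hj => ?_
      exact rhoAux_of_mem_ne Mc hindep hsup (by rintro rfl; exact hk hj)
        (rhoAux_mem Mc hindep hsup j y)
    refine ⟨s ∪ t, ?_⟩
    have h1 : x = ∑ j ∈ s ∪ t, rhoAux Mc hindep hsup j x :=
      hs.trans (Finset.sum_subset Finset.subset_union_left (fun k _ hk => hxz k hk))
    have h2 : y = ∑ j ∈ s ∪ t, rhoAux Mc hindep hsup j y :=
      ht.trans (Finset.sum_subset Finset.subset_union_right (fun k _ hk => hyz k hk))
    calc x + y = ∑ j ∈ s ∪ t, rhoAux Mc hindep hsup j x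
          + ∑ j ∈ s ∪ t, rhoAux Mc hindep hsup j y := by rw [← h1, ← h2]
      _ = ∑ j ∈ s ∪ t, rhoAux Mc hindep hsup j (x + y) := by
          rw [← Finset.sum_add_distrib]
          exact Finset.sum_congr rfl fun j _ => (map_add _ _ _).symm


variable (N : Submodule R M)

lemma rhoAux_mem_N (hNd : N = ⨆ i, N ⊓ Mc i) (i : ι) {n : M} (hn : n ∈ N) :
    rhoAux Mc hindep hsup i n ∈ N := by
  have hn' : n ∈ ⨆ j, N ⊓ Mc j := hNd ▸ hn
  refine Submodule.iSup_induction (fun j => N ⊓ Mc j)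
    (motive := fun m => rhoAux Mc hindep hsup i m ∈ N) hn' ?_ (by simp) ?_
  · intro j m hm
    rcases eq_or_ne j i with rfl | hj
    · rw [rhoAux_of_mem Mc hindep hsup hm.2]; exact hm.1
    · rw [rhoAux_of_mem_ne Mc hindep hsup hj hm.2]; exact N.zero_mem
  · intro a b ha hb; rw [map_add]; exact N.add_mem ha hb

lemma mem_of_rhoAux_mem {z : M} (hz : ∀ j, rhoAux Mc hindep hsup j z ∈ N) : z ∈ N := by
  obtain ⟨s, hs⟩ := rhoAux_sum Mc hindep hsup z
  rw [hs]; exact Submodule.sum_mem N fun j _ => hz j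

noncomputable def rhoBarAux (hNd : N = ⨆ i, N ⊓ Mc i) (i : ι) : (M ⧸ N) →ₗ[R] M ⧸ N :=
  Submodule.mapQ N N (rhoAux Mc hindep hsup i)
    (fun _ hn => rhoAux_mem_N Mc hindep hsup N hNd i hn)

lemma rhoBarAux_mk (hNd : N = ⨆ i, N ⊓ Mc i) (i : ι) (z : M) :
    rhoBarAux Mc hindep hsup N hNd i (N.mkQ z) = N.mkQ (rhoAux Mc hindep hsup i z) := by
  simp [rhoBarAux, Submodule.mapQ_apply]

lemma eq_zero_of_rhoBarAux (hNd : N = ⨆ i, N ⊓ Mc i) (w : M ⧸ N)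
    (h : ∀ j, rhoBarAux Mc hindep hsup N hNd j w = 0) : w = 0 := by
  obtain ⟨z, rfl⟩ := Submodule.Quotient.mk_surjective N w
  have hz : ∀ j, rhoAux Mc hindep hsup j z ∈ N := by
    intro j
    have := h j
    rw [← N.mkQ_apply, rhoBarAux_mk] at this
    simpa [Submodule.Quotient.mk_eq_zero] using this
  simpa [Submodule.Quotient.mk_eq_zero] using mem_of_rhoAux_mem Mc hindep hsup N hz

lemma keyAux (hdec : ∀ P : Submodule R M, P = ⨆ i, P ⊓ Mc i)
    (φ : (M ⧸ N) →ₗ[R] M ⧸ N) {i j : ι} (hij : j ≠ i) {x : M} (hx : x ∈ Mc i) :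
    rhoBarAux Mc hindep hsup N (hdec N) j (φ (N.mkQ x)) = 0 := by
  set g : M →ₗ[R] M ⧸ N := rhoBarAux Mc hindep hsup N (hdec N) j ∘ₗ φ ∘ₗ N.mkQ with hg
  show g x = 0
  obtain ⟨z, hz⟩ := Submodule.Quotient.mk_surjective N (φ (N.mkQ x))
  set y := rhoAux Mc hindep hsup j z with hy
  have hyj : y ∈ Mc j := rhoAux_mem Mc hindep hsup j z
  have hgx : g x = N.mkQ y := by
    show rhoBarAux Mc hindep hsup N (hdec N) j (φ (N.mkQ x)) = N.mkQ y
    rw [← hz, ← N.mkQ_apply, rhoBarAux_mk]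
  let K : Submodule R M :=
    { carrier := {m | ∃ a, a ∈ Mc i ∧ ∃ b, b ∈ Mc j ∧ m = a + b ∧ g a = N.mkQ b}
      zero_mem' := ⟨0, zero_mem _, 0, zero_mem _, by simp⟩
      add_mem' := by
        rintro m₁ m₂ ⟨a₁, ha₁, b₁, hb₁, rfl, he₁⟩ ⟨a₂, ha₂, b₂, hb₂, rfl, he₂⟩
        exact ⟨a₁ + a₂, add_mem ha₁ ha₂, b₁ + b₂, add_mem hb₁ hb₂, by abel,
          by rw [map_add, map_add, he₁, he₂]⟩
      smul_mem' := by
        rintro c m ⟨a, ha, b, hb, rfl, he⟩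
        exact ⟨c • a, Submodule.smul_mem _ c ha, c • b, Submodule.smul_mem _ c hb,
          by rw [smul_add], by rw [map_smul, map_smul, he]⟩ }
  have hxyK : x + y ∈ K := ⟨x, hx, y, hyj, rfl, hgx⟩
  have hxy' : x + y ∈ ⨆ k, K ⊓ Mc k := (hdec K) ▸ hxyK
  have hyK : rhoAux Mc hindep hsup j (x + y) ∈ K := by
    refine Submodule.iSup_induction (fun k => K ⊓ Mc k)
      (motive := fun m => rhoAux Mc hindep hsup j m ∈ K) hxy' ?_ (by simpa using K.zero_mem) ?_
    · intro k m hm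
      rcases eq_or_ne k j with rfl | hk
      · rw [rhoAux_of_mem Mc hindep hsup hm.2]; exact hm.1
      · rw [rhoAux_of_mem_ne Mc hindep hsup hk hm.2]; exact K.zero_mem
    · intro a b ha hb; rw [map_add]; exact K.add_mem ha hb
  have hryy : rhoAux Mc hindep hsup j (x + y) = y := by
    rw [map_add, rhoAux_of_mem_ne Mc hindep hsup hij.symm hx,
      rhoAux_of_mem Mc hindep hsup hyj, zero_add]
  rw [hryy] at hyK
  obtain ⟨a, ha, b, hb, hab, hgab⟩ := hyK
  have haj : a ∈ Mc j := by
    have : a = y - b := by rw [hab]; abel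
    rw [this]; exact sub_mem hyj hb
  have ha0 : a = 0 := by
    have := (hindep i).le_bot (x := a)
      ⟨ha, Submodule.mem_iSup_of_mem j (Submodule.mem_iSup_of_mem hij haj)⟩
    simpa using this
  have hb0 : N.mkQ b = 0 := by rw [← hgab, ha0, map_zero]
  have hby : b = y := by rw [hab, ha0, zero_add]
  rw [hgx, ← hby, hb0]

lemma fixAux (hdec : ∀ P : Submodule R M, P = ⨆ i, P ⊓ Mc i)
    (φ : (M ⧸ N) →ₗ[R] M ⧸ N) {i : ι} {x : M} (hx : x ∈ Mc i) :
    rhoBarAux Mc hindep hsup N (hdec N) i (φ (N.mkQ x)) = φ (N.mkQ x) := by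
  set u := φ (N.mkQ x) with hu
  obtain ⟨z, hz⟩ := Submodule.Quotient.mk_surjective N u
  have hrr : ∀ j, j ≠ i →
      rhoBarAux Mc hindep hsup N (hdec N) j (rhoBarAux Mc hindep hsup N (hdec N) i u) = 0 := by
    intro j hj
    rw [← hz, ← N.mkQ_apply, rhoBarAux_mk, rhoBarAux_mk,
      rhoAux_of_mem_ne Mc hindep hsup hj.symm (rhoAux_mem Mc hindep hsup i z), map_zero]
  have hri : rhoBarAux Mc hindep hsup N (hdec N) i (rhoBarAux Mc hindep hsup N (hdec N) i u)
      = rhoBarAux Mc hindep hsup N (hdec N) i u := by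
    rw [← hz, ← N.mkQ_apply, rhoBarAux_mk, rhoBarAux_mk,
      rhoAux_of_mem Mc hindep hsup (rhoAux_mem Mc hindep hsup i z)]
  have h0 : u - rhoBarAux Mc hindep hsup N (hdec N) i u = 0 := by
    refine eq_zero_of_rhoBarAux Mc hindep hsup N (hdec N) _ fun j => ?_
    rcases eq_or_ne j i with rfl | hj
    · rw [map_sub, hri, sub_self]
    · rw [map_sub, hrr j hj, hu, keyAux Mc hindep hsup N hdec φ hj hx, zero_sub, neg_zero]
  have := sub_eq_zero.mp h0
  exact this.symm

end AutLiftAux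

/-- If `M = ⊕ᵢ Mᵢ` and every submodule `N` satisfies `N = ⊕ᵢ (N ⊓ Mᵢ)`, then `M` is
automorphism-liftable iff every `Mᵢ` is automorphism-liftable. -/
theorem autLiftable_iff_forall_component_autLiftable
    (R M : Type*) [Ring R] [AddCommGroup M] [Module R M] {ι : Type*}
    (Mc : ι → Submodule R M)
    (hindep : iSupIndep Mc) (hsup : (⨆ i, Mc i) = ⊤)
    (hdec : ∀ N : Submodule R M, N = ⨆ i, N ⊓ Mc i) :
    AutLiftable R M ↔ ∀ i : ι, AutLiftable R (Mc i) := by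
  constructor
  · -- forward: M aut-liftable → each component is
    intro hM i N fbar
    set p := projAux Mc hindep hsup i with hp
    set φ : M →ₗ[R] (↥(Mc i) ⧸ N) := N.mkQ ∘ₗ p with hφ
    have hpx : ∀ x : Mc i, p (x : M) = x := fun x =>
      Submodule.linearProjOfIsCompl_apply_left _ x
    have hsurj : Function.Surjective φ := by
      intro q
      obtain ⟨x, rfl⟩ := Submodule.Quotient.mk_surjective N q
      exact ⟨(x : M), by simp [hφ, hpx x]⟩
    set e := φ.quotKerEquivOfSurjective hsurj with he
    have hemk : ∀ z : M, e (Submodule.Quotient.mk z) = φ z := fun z => rfl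
    set fbar' : (M ⧸ LinearMap.ker φ) ≃ₗ[R] (M ⧸ LinearMap.ker φ) :=
      e ≪≫ₗ fbar ≪≫ₗ e.symm with hfbar'
    obtain ⟨f, hf⟩ := hM (LinearMap.ker φ) fbar'
    refine ⟨p ∘ₗ f ∘ₗ (Mc i).subtype, ?_⟩
    ext x
    have hfx : fbar' (Submodule.Quotient.mk ((x : M))) = Submodule.Quotient.mk (f (x : M)) := by
      have := congrArg (fun g => g ((x : M))) hf
      simpa using this
    have key : e (fbar' (Submodule.Quotient.mk ((x : M)))) = fbar (e (Submodule.Quotient.mk ((x : M)))) := by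
      simp [hfbar']
    calc fbar (N.mkQ x) = fbar (φ (x : M)) := by simp [hφ, hpx x]
      _ = fbar (e (Submodule.Quotient.mk ((x : M)))) := by rw [hemk]
      _ = e (fbar' (Submodule.Quotient.mk ((x : M)))) := key.symm
      _ = e (Submodule.Quotient.mk (f (x : M))) := by rw [hfx]
      _ = φ (f (x : M)) := hemk _
      _ = N.mkQ (p (f ((Mc i).subtype x))) := rfl
  · -- backward
    intro hcomp N fbar
    classical
    -- component data
    have hproj : ∀ i, ∀ n ∈ N, projAux Mc hindep hsup i n ∈ N.comap (Mc i).subtype := by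
      intro i n hn
      exact rhoAux_mem_N Mc hindep hsup N (hdec N) i hn
    -- per-component lift
    have hlift : ∀ i : ι, ∃ fi : Mc i →ₗ[R] Mc i,
        ∀ x : Mc i, N.mkQ ((fi x : M)) = fbar (N.mkQ (x : M)) := by
      intro i
      set Ni : Submodule R (Mc i) := N.comap (Mc i).subtype with hNi
      set ei : (↥(Mc i) ⧸ Ni) →ₗ[R] M ⧸ N :=
        Submodule.mapQ Ni N (Mc i).subtype (fun x hx => hx) with hei
      set pii : (M ⧸ N) →ₗ[R] ↥(Mc i) ⧸ Ni :=
        Submodule.mapQ N Ni (projAux Mc hindep hsup i) (fun n hn => hproj i n hn) with hpii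
      have hei_mk : ∀ x : Mc i, ei (Ni.mkQ x) = N.mkQ (x : M) := fun x =>
        Submodule.mapQ_apply _ _ _ _
      have hpii_mk : ∀ z : M, pii (N.mkQ z) = Ni.mkQ (projAux Mc hindep hsup i z) := fun z =>
        Submodule.mapQ_apply _ _ _ _
      have heipii : ∀ u : M ⧸ N, ei (pii u) = rhoBarAux Mc hindep hsup N (hdec N) i u := by
        intro u
        obtain ⟨z, rfl⟩ := Submodule.Quotient.mk_surjective N u
        rw [← N.mkQ_apply, hpii_mk, hei_mk, rhoBarAux_mk]
        rfl
      have hpiiei : ∀ w : ↥(Mc i) ⧸ Ni, pii (ei w) = w := by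
        intro w
        obtain ⟨x, rfl⟩ := Submodule.Quotient.mk_surjective Ni w
        rw [← Ni.mkQ_apply, hei_mk, hpii_mk]
        congr 1
        exact Submodule.linearProjOfIsCompl_apply_left _ x
      set F : (↥(Mc i) ⧸ Ni) →ₗ[R] ↥(Mc i) ⧸ Ni :=
        pii ∘ₗ (fbar : (M ⧸ N) →ₗ[R] M ⧸ N) ∘ₗ ei with hF
      set G : (↥(Mc i) ⧸ Ni) →ₗ[R] ↥(Mc i) ⧸ Ni :=
        pii ∘ₗ (fbar.symm : (M ⧸ N) →ₗ[R] M ⧸ N) ∘ₗ ei with hG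
      have hfixf : ∀ x : Mc i, ei (pii (fbar (N.mkQ (x : M)))) = fbar (N.mkQ (x : M)) := by
        intro x
        rw [heipii]
        exact fixAux Mc hindep hsup N hdec (fbar : (M ⧸ N) →ₗ[R] M ⧸ N) x.2
      have hfixg : ∀ x : Mc i, ei (pii (fbar.symm (N.mkQ (x : M)))) = fbar.symm (N.mkQ (x : M)) := by
        intro x
        rw [heipii]
        exact fixAux Mc hindep hsup N hdec (fbar.symm : (M ⧸ N) →ₗ[R] M ⧸ N) x.2
      have hGF : G ∘ₗ F = LinearMap.id := by
        refine Submodule.linearMap_qext _ ?_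
        ext x
        simp only [LinearMap.comp_apply, Submodule.mkQ_apply, LinearMap.id_apply]
        rw [← Ni.mkQ_apply, hF, hG]
        simp only [LinearMap.comp_apply, LinearEquiv.coe_coe]
        rw [hei_mk, hfixf x, LinearEquiv.symm_apply_apply, hpii_mk]
        congr 1
        exact Submodule.linearProjOfIsCompl_apply_left _ x
      have hFG : F ∘ₗ G = LinearMap.id := by
        refine Submodule.linearMap_qext _ ?_
        ext x
        simp only [LinearMap.comp_apply, Submodule.mkQ_apply, LinearMap.id_apply]
        rw [← Ni.mkQ_apply, hF, hG]
        simp only [LinearMap.comp_apply, LinearEquiv.coe_coe]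
        rw [hei_mk, hfixg x, LinearEquiv.apply_symm_apply, hpii_mk]
        congr 1
        exact Submodule.linearProjOfIsCompl_apply_left _ x
      set Fi : (↥(Mc i) ⧸ Ni) ≃ₗ[R] ↥(Mc i) ⧸ Ni := LinearEquiv.ofLinear F G hFG hGF with hFi
      obtain ⟨fi, hfi⟩ := hcomp i Ni Fi
      refine ⟨fi, fun x => ?_⟩
      have h1 : Fi (Ni.mkQ x) = Ni.mkQ (fi x) := by
        have := LinearMap.congr_fun hfi x
        simpa using this
      have h2 : Fi (Ni.mkQ x) = F (Ni.mkQ x) := rfl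
      calc N.mkQ ((fi x : M)) = ei (Ni.mkQ (fi x)) := (hei_mk _).symm
        _ = ei (Fi (Ni.mkQ x)) := by rw [h1]
        _ = ei (F (Ni.mkQ x)) := by rw [h2]
        _ = ei (pii (fbar (ei (Ni.mkQ x)))) := by rw [hF]; rfl
        _ = ei (pii (fbar (N.mkQ (x : M)))) := by rw [hei_mk]
        _ = fbar (N.mkQ (x : M)) := hfixf x
    choose fi hfi using hlift
    have hin : DirectSum.IsInternal Mc :=
      DirectSum.isInternal_submodule_of_iSupIndep_of_iSup_eq_top hindep hsup
    set D := LinearEquiv.ofBijective (DirectSum.coeLinearMap Mc) hin with hD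
    set f : M →ₗ[R] M :=
      (DirectSum.toModule R ι M (fun i => (Mc i).subtype ∘ₗ fi i)) ∘ₗ
        (D.symm : M →ₗ[R] DirectSum ι fun i => ↥(Mc i)) with hf
    refine ⟨f, ?_⟩
    ext z
    simp only [LinearMap.comp_apply, Submodule.mkQ_apply, LinearEquiv.coe_coe]
    rw [← N.mkQ_apply, ← N.mkQ_apply]
    have hz : z ∈ ⨆ i, Mc i := hsup ▸ Submodule.mem_top
    refine Submodule.iSup_induction Mc (motive := fun z => fbar (N.mkQ z) = N.mkQ (f z)) hz ?_ ?_ ?_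
    · intro i z hzi
      have hD1 : D.symm z = DirectSum.of (fun i => ↥(Mc i)) i ⟨z, hzi⟩ := by
        rw [LinearEquiv.symm_apply_eq, hD]
        show z = DirectSum.coeLinearMap Mc (DirectSum.of (fun i => ↥(Mc i)) i ⟨z, hzi⟩)
        rw [DirectSum.coeLinearMap_of]
      have hfz : f z = ((fi i ⟨z, hzi⟩ : Mc i) : M) := by
        rw [hf]
        simp only [LinearMap.comp_apply, LinearEquiv.coe_coe]
        rw [hD1, ← DirectSum.lof_eq_of R, DirectSum.toModule_lof]
        rfl
      rw [hfz]
      exact (hfi i ⟨z, hzi⟩).symm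
    · simp
    · intro a b ha hb
      rw [map_add, map_add, ha, hb, ← map_add, ← map_add]
end

section
/- If an automorphism-liftable module M is the direct sum of submodules X and Y, then X and Y are automorphism-liftable. -/
theorem aux_summand_autLiftable
    (R M : Type*) [Ring R] [AddCommGroup M] [Module R M]
    (X Y : Submodule R M) (hXY : IsCompl X Y)
    (hM : ∀ (N : Submodule R M) (fbar : (M ⧸ N) ≃ₗ[R] (M ⧸ N)),
      ∃ f : M →ₗ[R] M, (fbar : (M ⧸ N) →ₗ[R] (M ⧸ N)) ∘ₗ N.mkQ = N.mkQ ∘ₗ f) :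
    ∀ (N : Submodule R X) (fbar : (X ⧸ N) ≃ₗ[R] (X ⧸ N)),
      ∃ f : X →ₗ[R] X, (fbar : (X ⧸ N) →ₗ[R] (X ⧸ N)) ∘ₗ N.mkQ = N.mkQ ∘ₗ f := by
  intro N fbar
  set πX := X.projectionOnto Y hXY with hπX
  set πY := Y.projectionOnto X hXY.symm with hπY
  set φ : M →ₗ[R] (X ⧸ N) × Y := (N.mkQ ∘ₗ πX).prod πY with hφ
  set N' := N.map X.subtype with hN'
  have hφapp : ∀ m : M, φ m = (N.mkQ (πX m), πY m) := fun m => rfl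
  have hle : N' ≤ LinearMap.ker φ := by
    rintro _ ⟨n, hn, rfl⟩
    simp only [LinearMap.mem_ker, hφapp, Prod.mk_eq_zero]
    constructor
    · rw [Submodule.subtype_apply, hπX, Submodule.projectionOnto_apply_left]
      simpa using hn
    · rw [Submodule.subtype_apply, hπY, Submodule.projectionOnto_apply_right]
  have hge : LinearMap.ker φ ≤ N' := by
    intro m hm
    rw [LinearMap.mem_ker] at hm
    have h1 : N.mkQ (πX m) = 0 := congrArg Prod.fst hm
    have h2 : πY m = 0 := congrArg Prod.snd hm
    have hmem : πX m ∈ N := (Submodule.Quotient.mk_eq_zero N).mp h1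
    have hm' : (πX m : M) = m := by
      have : ((X.projectionOnto Y hXY m : X) : M) + ((Y.projectionOnto X hXY.symm m : Y) : M) = m :=
        Submodule.projection_add_projection_eq_self hXY m
      rw [hπY] at h2
      rw [h2] at this
      simp only [ZeroMemClass.coe_zero, add_zero] at this
      exact this
    exact ⟨πX m, hmem, hm'⟩
  have hsurj : Function.Surjective φ := by
    rintro ⟨xb, y⟩
    obtain ⟨x, rfl⟩ := N.mkQ_surjective xb
    refine ⟨(x : M) + (y : M), ?_⟩
    rw [hφapp]
    simp [hπX, hπY, Submodule.projectionOnto_apply_left,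
      Submodule.projectionOnto_apply_right]
  have hinj : Function.Injective (N'.liftQ φ hle) := by
    rw [← LinearMap.ker_eq_bot, Submodule.ker_liftQ_eq_bot]
    exact hge
  have hsurj' : Function.Surjective (N'.liftQ φ hle) := by
    intro z
    obtain ⟨m, hm⟩ := hsurj z
    exact ⟨N'.mkQ m, by simpa using hm⟩
  set e : (M ⧸ N') ≃ₗ[R] (X ⧸ N) × Y :=
    LinearEquiv.ofBijective (N'.liftQ φ hle) ⟨hinj, hsurj'⟩ with he
  have heapp : ∀ m : M, e (N'.mkQ m) = φ m := fun m => by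
    simp [he, LinearEquiv.ofBijective_apply]
    rfl
  set Fbar : (M ⧸ N') ≃ₗ[R] (M ⧸ N') :=
    e ≪≫ₗ (fbar.prodCongr (LinearEquiv.refl R Y)) ≪≫ₗ e.symm with hF
  obtain ⟨f, hf⟩ := hM N' Fbar
  refine ⟨πX ∘ₗ f ∘ₗ X.subtype, ?_⟩
  ext x
  have hfx := LinearMap.congr_fun hf (x : M)
  simp only [LinearMap.coe_comp, Function.comp_apply, LinearEquiv.coe_coe,
    Submodule.mkQ_apply] at hfx ⊢
  have heapp' : ∀ m : M, e (Submodule.Quotient.mk m : M ⧸ N') = φ m := heapp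
  have key := congrArg e hfx
  rw [hF] at key
  simp only [LinearEquiv.trans_apply, LinearEquiv.apply_symm_apply] at key
  rw [heapp', heapp', hφapp, hφapp] at key
  have hx1 : πX (x : M) = x := by rw [hπX]; exact Submodule.projectionOnto_apply_left hXY x
  have hx2 : πY (x : M) = 0 := by rw [hπY]; exact Submodule.projectionOnto_apply_right hXY.symm x
  rw [hx1, hx2] at key
  have := congrArg Prod.fst key
  simpa using this

/-- Direct summands of an automorphism-liftable module are automorphism-liftable. -/
theorem summands_autLiftable_of_autLiftable
    (R M : Type*) [Ring R] [AddCommGroup M] [Module R M]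
    (X Y : Submodule R M) (hXY : IsCompl X Y) (hM : AutLiftable R M) :
    AutLiftable R X ∧ AutLiftable R Y :=
  ⟨aux_summand_autLiftable R M X Y hXY hM, aux_summand_autLiftable R M Y X hXY.symm hM⟩
end

section
/- If an automorphism-liftable module M is the direct sum of submodules X and Y, then X is projective with respect to Y (Y-projective) and Y is projective with respect to X. -/
/-- `X` is projective with respect to `Y` if every homomorphism from `X` to a factor
module of `Y` lifts to a homomorphism `X → Y` along the natural projection. -/
def RelProjective (R X Y : Type*) [Ring R] [AddCommGroup X] [Module R X]
    [AddCommGroup Y] [Module R Y] : Prop :=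
  ∀ (P : Submodule R Y) (fbar : X →ₗ[R] Y ⧸ P),
    ∃ f : X →ₗ[R] Y, P.mkQ ∘ₗ f = fbar


theorem aux_relProj (R M : Type*) [Ring R] [AddCommGroup M] [Module R M]
    (X Y : Submodule R M) (hXY : IsCompl X Y) (hM : AutLiftable R M) :
    RelProjective R X Y := by
  intro P fbar
  set N : Submodule R M := P.map Y.subtype with hN
  let prX : M →ₗ[R] X := X.projectionOnto Y hXY
  let prY : M →ₗ[R] Y := Y.projectionOnto X hXY.symm
  have hj : P ≤ Submodule.comap Y.subtype N := by
    intro y hy; exact ⟨y, hy, rfl⟩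
  let j : (Y ⧸ P) →ₗ[R] M ⧸ N := P.mapQ N Y.subtype hj
  have hNmem : ∀ m : M, m ∈ N → ∃ y : Y, y ∈ P ∧ (y : M) = m := by
    rintro m ⟨y, hy, rfl⟩; exact ⟨y, hy, rfl⟩
  have hkerr : N ≤ LinearMap.ker (P.mkQ ∘ₗ prY) := by
    intro m hm
    obtain ⟨y, hy, rfl⟩ := hNmem m hm
    simp [prY, Submodule.projectionOnto_apply_left,
      (Submodule.Quotient.mk_eq_zero P).2 hy]
  let r : (M ⧸ N) →ₗ[R] Y ⧸ P := N.liftQ (P.mkQ ∘ₗ prY) hkerr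
  have hkeru : N ≤ LinearMap.ker (j ∘ₗ fbar ∘ₗ prX) := by
    intro m hm
    obtain ⟨y, hy, rfl⟩ := hNmem m hm
    simp [prX, Submodule.projectionOnto_apply_right]
  let ubar : (M ⧸ N) →ₗ[R] M ⧸ N := N.liftQ (j ∘ₗ fbar ∘ₗ prX) hkeru
  have hub : ∀ m : M, ubar (N.mkQ m) = j (fbar (prX m)) := fun m => rfl
  have huj : ∀ z : Y ⧸ P, ubar (j z) = 0 := by
    intro z
    obtain ⟨y, rfl⟩ := P.mkQ_surjective z
    have : j (P.mkQ y) = N.mkQ (y : M) := rfl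
    rw [this, hub]
    simp [prX, Submodule.projectionOnto_apply_right]
  have hu2 : ∀ z : M ⧸ N, ubar (ubar z) = 0 := by
    intro z
    obtain ⟨m, rfl⟩ := N.mkQ_surjective z
    rw [hub]; exact huj _
  let φ : (M ⧸ N) ≃ₗ[R] M ⧸ N :=
    LinearEquiv.ofLinear (LinearMap.id + ubar) (LinearMap.id - ubar)
      (by ext z; simp [hu2]) (by ext z; simp [hu2])
  obtain ⟨f, hf⟩ := hM N φ
  refine ⟨prY ∘ₗ f ∘ₗ X.subtype, ?_⟩
  ext x
  have hfx : N.mkQ (f (x : M)) = φ (N.mkQ (x : M)) := by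
    have := congrArg (fun g => g (x : M)) hf
    simpa using this.symm
  have hrj : ∀ z : Y ⧸ P, r (j z) = z := by
    intro z
    obtain ⟨y, rfl⟩ := P.mkQ_surjective z
    have : j (P.mkQ y) = N.mkQ (y : M) := rfl
    rw [this]
    show P.mkQ (prY (y : M)) = P.mkQ y
    simp [prY, Submodule.projectionOnto_apply_left]
  have key : r (N.mkQ (f (x : M))) = fbar x := by
    rw [hfx]
    have hφ : φ (N.mkQ (x : M)) = N.mkQ (x : M) + ubar (N.mkQ (x : M)) := rfl
    rw [hφ, map_add, hub, hrj]
    have h1 : r (N.mkQ (x : M)) = P.mkQ (prY (x : M)) := rfl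
    have h2 : prY (x : M) = 0 := Submodule.projectionOnto_apply_right hXY.symm x
    have h3 : prX (x : M) = x := Submodule.projectionOnto_apply_left hXY x
    rw [h1, h2, h3]; simp
  exact key

/-- If an automorphism-liftable module is the direct sum of `X` and `Y`, then `X` and
`Y` are projective with respect to each other. -/
theorem summands_relProjective_of_autLiftable
    (R M : Type*) [Ring R] [AddCommGroup M] [Module R M]
    (X Y : Submodule R M) (hXY : IsCompl X Y) (hM : AutLiftable R M) :
    RelProjective R X Y ∧ RelProjective R Y X := by
  exact ⟨aux_relProj R M X Y hXY hM, aux_relProj R M Y X hXY.symm hM⟩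
end

section
/- The Prüfer group ℤ(p^∞) is an endomorphism-liftable ℤ-module. -/
/-- The Prüfer `p`-group `ℤ(p^∞)`, realized as `ℤ[1/p] ⧸ ℤ`. -/
abbrev PruferModule (p : ℕ) :=
  Localization.Away (p : ℤ) ⧸
    Submodule.span ℤ {(1 : Localization.Away (p : ℤ))}

namespace PruferAux

variable (p : ℕ)

local notation "A" => Localization.Away (p : ℤ)

noncomputable def u : Localization.Away (p : ℤ) := IsLocalization.Away.invSelf (p : ℤ)

lemma p_mul_u : algebraMap ℤ A (p : ℤ) * u p = 1 :=
  IsLocalization.Away.mul_invSelf (p : ℤ)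

lemma smul_eq_algebraMap_mul (k : ℤ) (x : A) : k • x = algebraMap ℤ A k * x := by
  simp [algebraMap_int_eq, zsmul_eq_mul]

/-- Every element of `ℤ[1/p]` is `k • (1/p)^m`. -/
lemma rep_A (a : A) : ∃ (k : ℤ) (m : ℕ), a = k • (u p) ^ m := by
  obtain ⟨⟨k, s⟩, hs⟩ := IsLocalization.surj (Submonoid.powers (p : ℤ)) a
  obtain ⟨m, hm⟩ := s.2
  refine ⟨k, m, ?_⟩
  have hpow : algebraMap ℤ A ((p:ℤ)^m) * (u p) ^ m = 1 := by
    rw [map_pow, ← mul_pow, p_mul_u, one_pow]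
  have h : a * algebraMap ℤ A ((p:ℤ)^m) = algebraMap ℤ A k := by
    simpa [hm] using hs
  calc a = a * (algebraMap ℤ A ((p:ℤ)^m) * (u p) ^ m) := by rw [hpow, mul_one]
    _ = (a * algebraMap ℤ A ((p:ℤ)^m)) * (u p) ^ m := by ring
    _ = algebraMap ℤ A k * (u p) ^ m := by rw [h]
    _ = k • (u p) ^ m := (smul_eq_algebraMap_mul p k _).symm

lemma inj_A (hp : p.Prime) : Function.Injective (algebraMap ℤ A) :=
  IsLocalization.injective _ (powers_le_nonZeroDivisors_of_noZeroDivisors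
    (show ((p:ℤ)) ≠ 0 by exact_mod_cast hp.ne_zero))

/-- generator at level `n` in the Prüfer module -/
noncomputable def t (n : ℕ) : PruferModule p :=
  (Submodule.span ℤ {(1 : Localization.Away (p : ℤ))}).mkQ ((u p) ^ n)

lemma pow_smul_u (n m : ℕ) : ((p : ℤ) ^ m) • (u p) ^ (n + m) = (u p) ^ n := by
  have h : (algebraMap ℤ A ((p:ℤ)^m)) * (u p) ^ (n + m) = (u p) ^ n := by
    rw [map_pow, pow_add, mul_comm ((u p)^n), ← mul_assoc, ← mul_pow, p_mul_u, one_pow, one_mul]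
  simpa [algebraMap_int_eq, zsmul_eq_mul] using h

lemma pow_smul_t (n m : ℕ) : ((p : ℤ) ^ m) • t p (n + m) = t p n := by
  rw [t, t, ← map_smul, pow_smul_u]

lemma t_zero : t p 0 = 0 := by
  rw [t, pow_zero, Submodule.mkQ_apply, Submodule.Quotient.mk_eq_zero]
  exact Submodule.mem_span_singleton_self 1

/-- Every element of the Prüfer module is `k • t m`. -/
lemma rep (x : PruferModule p) : ∃ (k : ℤ) (m : ℕ), x = k • t p m := by
  obtain ⟨a, rfl⟩ := (Submodule.span ℤ {(1 : Localization.Away (p : ℤ))}).mkQ_surjective x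
  obtain ⟨k, m, rfl⟩ := rep_A p a
  exact ⟨k, m, by rw [t, map_smul]⟩

lemma pow_smul_t_self (m : ℕ) : ((p : ℤ) ^ m) • t p m = 0 := by
  have := pow_smul_t p 0 m
  rw [zero_add] at this
  rw [this, t_zero]

lemma smul_t_eq_zero (hp : p.Prime) {k : ℤ} {m : ℕ} (h : k • t p m = 0) :
    ∃ c : ℤ, k = c * (p:ℤ)^m := by
  rw [t, ← map_smul, Submodule.mkQ_apply, Submodule.Quotient.mk_eq_zero] at h
  obtain ⟨c, hc⟩ := Submodule.mem_span_singleton.mp h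
  refine ⟨c, inj_A p hp ?_⟩
  have hpow : algebraMap ℤ A ((p:ℤ)^m) * (u p) ^ m = 1 := by
    rw [map_pow, ← mul_pow, p_mul_u, one_pow]
  have hc' : (algebraMap ℤ A c) = algebraMap ℤ A k * (u p) ^ m := by
    rw [← smul_eq_algebraMap_mul]
    simpa [smul_eq_algebraMap_mul] using hc
  rw [map_mul]
  calc algebraMap ℤ A k = algebraMap ℤ A k * (algebraMap ℤ A ((p:ℤ)^m) * (u p) ^ m) := by
        rw [hpow, mul_one]
    _ = (algebraMap ℤ A k * (u p) ^ m) * algebraMap ℤ A ((p:ℤ)^m) := by ring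
    _ = algebraMap ℤ A c * algebraMap ℤ A ((p:ℤ)^m) := by rw [hc']

/-- Classification of proper submodules of the Prüfer module. -/
lemma classification (hp : p.Prime) (N : Submodule ℤ (PruferModule p)) (hN : N ≠ ⊤) :
    ∃ n : ℕ, ∀ x : PruferModule p, x ∈ N ↔ ((p:ℤ)^n) • x = 0 := by
  classical
  have hex : ∃ m, t p m ∉ N := by
    by_contra hcon
    push_neg at hcon
    apply hN
    rw [eq_top_iff]
    intro x _
    obtain ⟨k, m, rfl⟩ := rep p x
    exact N.smul_mem k (hcon m)
  have hn₀pos : Nat.find hex ≠ 0 := by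
    intro h
    have hs := Nat.find_spec hex
    rw [h, t_zero] at hs
    exact hs N.zero_mem
  set n := Nat.find hex - 1 with hn
  have hmem : t p n ∈ N := by
    by_contra hcon
    exact Nat.find_min hex (by omega) hcon
  have hbound : ∀ m, t p m ∈ N → m ≤ n := by
    intro m hm
    by_contra hcon
    push_neg at hcon
    have hm0 : Nat.find hex ≤ m := by omega
    have hmem2 : t p (Nat.find hex) ∈ N := by
      have h2 := pow_smul_t p (Nat.find hex) (m - Nat.find hex)
      rw [show Nat.find hex + (m - Nat.find hex) = m by omega] at h2
      rw [← h2]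
      exact N.smul_mem _ hm
    exact (Nat.find_spec hex) hmem2
  refine ⟨n, fun x => ⟨?_, ?_⟩⟩
  · -- forward: x ∈ N → p^n • x = 0
    intro hx
    obtain ⟨k, m, rfl⟩ := rep p x
    revert k
    induction m using Nat.strong_induction_on with
    | _ m ih =>
      intro k hx
      by_cases hmn : m ≤ n
      · have h1 : ((p:ℤ)^n) • t p m = 0 := by
          have := pow_smul_t p m (n - m)
          rw [show m + (n - m) = n by omega] at this
          calc ((p:ℤ)^n) • t p m = ((p:ℤ)^(n-m) * (p:ℤ)^m) • t p m := by
                rw [← pow_add, show n - m + m = n by omega]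
            _ = ((p:ℤ)^(n-m)) • (((p:ℤ)^m) • t p m) := by rw [mul_smul]
            _ = 0 := by rw [pow_smul_t_self, smul_zero]
        rw [smul_comm, h1, smul_zero]
      · push_neg at hmn
        by_cases hdvd : (p:ℤ) ∣ k
        · obtain ⟨k', rfl⟩ := hdvd
          have hm1 : m - 1 < m := by omega
          have ht : ((p:ℤ) * k') • t p m = k' • t p (m - 1) := by
            have := pow_smul_t p (m - 1) 1
            rw [pow_one, show m - 1 + 1 = m by omega] at this
            rw [mul_comm, mul_smul, this]
          rw [ht] at hx ⊢
          exact ih (m - 1) hm1 k' hx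
        · exfalso
          have hprime : Prime ((p:ℤ)) := Nat.prime_iff_prime_int.mp hp
          have hcop : IsCoprime ((p:ℤ)^m) k :=
            (hprime.coprime_iff_not_dvd.mpr hdvd).pow_left
          obtain ⟨a, b, hab⟩ := hcop
          have : t p m ∈ N := by
            have h1 : t p m = (a * (p:ℤ)^m + b * k) • t p m := by rw [hab, one_smul]
            rw [h1, add_smul]
            refine N.add_mem ?_ ?_
            · rw [mul_smul, pow_smul_t_self, smul_zero]
              exact N.zero_mem
            · rw [mul_smul]
              exact N.smul_mem b hx
          exact absurd (hbound m this) (by omega)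
  · -- backward: p^n • x = 0 → x ∈ N
    intro hx
    obtain ⟨k, m, rfl⟩ := rep p x
    by_cases hmn : m ≤ n
    · have : t p m = ((p:ℤ)^(n-m)) • t p n := by
        have := pow_smul_t p m (n - m)
        rw [show m + (n - m) = n by omega] at this
        exact this.symm
      rw [this, smul_comm]
      exact N.smul_mem _ (N.smul_mem k hmem)
    · push_neg at hmn
      have h0 : ((p:ℤ)^n * k) • t p m = 0 := by
        rw [mul_smul]
        exact hx
      obtain ⟨c, hc⟩ := smul_t_eq_zero p hp h0
      have hk : k = c * (p:ℤ)^(m-n) := by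
        have hpn : ((p:ℤ)^n) ≠ 0 := pow_ne_zero _ (by exact_mod_cast hp.ne_zero)
        apply mul_left_cancel₀ hpn
        rw [hc, show (p:ℤ)^m = (p:ℤ)^n * (p:ℤ)^(m-n) by
          rw [← pow_add, show n + (m - n) = m by omega]]
        ring
      have ht : ((p:ℤ)^(m-n)) • t p m = t p n := by
        have := pow_smul_t p n (m - n)
        rw [show n + (m - n) = m by omega] at this
        exact this
      rw [hk, mul_smul, ht]
      exact N.smul_mem c hmem

/-- `p^n • ·` is surjective on the Prüfer module. -/
lemma pow_smul_surjective (n : ℕ) :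
    Function.Surjective (fun x : PruferModule p => ((p:ℤ)^n) • x) := by
  intro y
  obtain ⟨k, m, rfl⟩ := rep p y
  refine ⟨k • t p (m + n), ?_⟩
  simp only
  rw [smul_comm, pow_smul_t p m n]

end PruferAux

/-- The Prüfer group `ℤ(p^∞)` is an endomorphism-liftable `ℤ`-module. -/
theorem pruferModule_endLiftable (p : ℕ) (hp : p.Prime) :
    EndLiftable ℤ (PruferModule p) := by
  intro N fbar
  by_cases hN : N = ⊤
  · refine ⟨0, ?_⟩
    haveI : Subsingleton (PruferModule p ⧸ N) :=
      Submodule.Quotient.subsingleton_iff.mpr hN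
    apply LinearMap.ext
    intro x
    exact Subsingleton.elim _ _
  · obtain ⟨n, hclass⟩ := PruferAux.classification p hp N hN
    set μ : PruferModule p →ₗ[ℤ] PruferModule p := ((p:ℤ)^n) • LinearMap.id with hμ
    have hμapp : ∀ x, μ x = ((p:ℤ)^n) • x := fun x => rfl
    have hker : N ≤ LinearMap.ker μ := fun x hx => by
      rw [LinearMap.mem_ker, hμapp]; exact (hclass x).mp hx
    set φ : (PruferModule p ⧸ N) →ₗ[ℤ] PruferModule p := N.liftQ μ hker with hφ
    have hφmk : ∀ x, φ (N.mkQ x) = ((p:ℤ)^n) • x := fun x => rfl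
    have hinj : Function.Injective φ := by
      rw [← LinearMap.ker_eq_bot]
      apply Submodule.ker_liftQ_eq_bot
      intro x hx
      exact (hclass x).mpr (by rw [LinearMap.mem_ker, hμapp] at hx; exact hx)
    have hsurj : Function.Surjective φ := by
      intro y
      obtain ⟨x, hx⟩ := PruferAux.pow_smul_surjective p n y
      exact ⟨N.mkQ x, hx⟩
    let e : (PruferModule p ⧸ N) ≃ₗ[ℤ] PruferModule p := LinearEquiv.ofBijective φ ⟨hinj, hsurj⟩
    have he : ∀ z, e z = φ z := fun z => rfl
    have key : ∀ y : PruferModule p, ((p:ℤ)^n) • (e.symm y) = N.mkQ y := by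
      intro y
      apply e.injective
      rw [map_smul, e.apply_symm_apply, he, hφmk]
    refine ⟨e.toLinearMap ∘ₗ fbar ∘ₗ e.symm.toLinearMap, ?_⟩
    apply LinearMap.ext
    intro x
    show fbar (N.mkQ x) = N.mkQ (e (fbar (e.symm x)))
    have key2 : N.mkQ (e (fbar (e.symm x))) = ((p:ℤ)^n) • (fbar (e.symm x)) := by
      obtain ⟨w, hw⟩ := N.mkQ_surjective (fbar (e.symm x))
      rw [← hw, he, hφmk, map_smul]
    rw [key2, ← map_smul, key]
end

section
/- The Prüfer group ℤ(p^∞) is not a quasi-projective ℤ-module. -/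
namespace PruferNotQPAux

variable (p : ℕ)

noncomputable def uu : Localization.Away ((p:ℕ):ℤ) :=
  IsLocalization.Away.invSelf (S := Localization.Away ((p:ℕ):ℤ)) ((p:ℕ):ℤ)

lemma smul_eq (n : ℤ) (x : Localization.Away ((p:ℕ):ℤ)) :
    n • x = algebraMap ℤ (Localization.Away ((p:ℕ):ℤ)) n * x := by
  simp [zsmul_eq_mul]

lemma mem_SS {x : Localization.Away ((p:ℕ):ℤ)} :
    x ∈ Submodule.span ℤ {(1 : Localization.Away ((p:ℕ):ℤ))} ↔
      ∃ n : ℤ, algebraMap ℤ (Localization.Away ((p:ℕ):ℤ)) n = x := by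
  simp [Submodule.mem_span_singleton, smul_eq]

lemma p_smul_uu : ((p:ℕ):ℤ) • uu p = 1 := by
  rw [smul_eq, uu, IsLocalization.Away.mul_invSelf]

lemma torsion_LL (y : Localization.Away ((p:ℕ):ℤ)) :
    ∃ k : ℕ, (((p:ℕ):ℤ)^k) • y ∈ Submodule.span ℤ {(1 : Localization.Away ((p:ℕ):ℤ))} := by
  induction y using Localization.induction_on with
  | H d =>
    obtain ⟨a, s⟩ := d
    obtain ⟨k, hk⟩ := s.2
    refine ⟨k, ?_⟩
    have h1 : (((p:ℕ):ℤ)^k) • Localization.mk a s = Localization.mk ((((p:ℕ):ℤ)^k) * a) s := by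
      rw [zsmul_eq_mul, ← eq_intCast (algebraMap ℤ (Localization.Away ((p:ℕ):ℤ))) (((p:ℕ):ℤ)^k),
        ← Localization.mk_one_eq_algebraMap, Localization.mk_mul, one_mul]
    have h2 : Localization.mk ((((p:ℕ):ℤ)^k) * a) s = Localization.mk a 1 := by
      rw [show ((((p:ℕ):ℤ)^k) * a) = a * (s : ℤ) by rw [← hk]; ring]
      rw [show Localization.mk (a * (s:ℤ)) s = Localization.mk a 1 * Localization.mk (s:ℤ) s by
        rw [Localization.mk_mul, one_mul], Localization.mk_self, mul_one]
    rw [h1, h2, Localization.mk_one_eq_algebraMap]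
    exact Submodule.mem_span_singleton.2 ⟨a, by simp [zsmul_eq_mul]⟩

variable (hp : p.Prime)
include hp

lemma hinj : Function.Injective (algebraMap ℤ (Localization.Away ((p:ℕ):ℤ))) :=
  IsLocalization.injective _ (powers_le_nonZeroDivisors_of_noZeroDivisors
    (Nat.prime_iff_prime_int.mp hp).ne_zero)

/-- the class of `1/p` in the Prüfer module -/
noncomputable def cc : PruferModule p :=
  (Submodule.span ℤ {(1 : Localization.Away ((p:ℕ):ℤ))}).mkQ (uu p)

lemma cc_ne_zero : cc p ≠ 0 := by
  intro h
  have hu : uu p ∈ Submodule.span ℤ {(1 : Localization.Away ((p:ℕ):ℤ))} := by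
    simpa [cc, Submodule.Quotient.mk_eq_zero] using h
  obtain ⟨n, hn⟩ := (mem_SS p).1 hu
  have h1 : algebraMap ℤ (Localization.Away ((p:ℕ):ℤ)) (((p:ℕ):ℤ) * n) = algebraMap ℤ _ 1 := by
    rw [map_mul, hn, map_one]
    have h0 := p_smul_uu p
    rwa [smul_eq] at h0
  have h2 : ((p:ℕ):ℤ) * n = 1 := hinj p hp h1
  exact (Nat.prime_iff_prime_int.mp hp).not_isUnit (IsUnit.of_mul_eq_one _ h2)

omit hp in
lemma p_smul_cc : ((p:ℕ):ℤ) • cc p = 0 := by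
  have : ((p:ℕ):ℤ) • cc p =
      (Submodule.span ℤ {(1 : Localization.Away ((p:ℕ):ℤ))}).mkQ (((p:ℕ):ℤ) • uu p) :=
    (map_smul (Submodule.span ℤ {(1 : Localization.Away ((p:ℕ):ℤ))}).mkQ _ _).symm
  rw [this, p_smul_uu, Submodule.mkQ_apply, Submodule.Quotient.mk_eq_zero]
  exact Submodule.mem_span_singleton_self _

/-- every `p`-torsion element of the Prüfer module is a multiple of `cc` -/
lemma ker_struct (x : PruferModule p) (hx : ((p:ℕ):ℤ) • x = 0) :
    ∃ n : ℤ, x = n • cc p := by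
  obtain ⟨y, rfl⟩ := Submodule.mkQ_surjective _ x
  have hy : ((p:ℕ):ℤ) • y ∈ Submodule.span ℤ {(1 : Localization.Away ((p:ℕ):ℤ))} := by
    rw [← Submodule.Quotient.mk_eq_zero, ← Submodule.mkQ_apply, map_smul]
    exact hx
  obtain ⟨n, hn⟩ := (mem_SS p).1 hy
  haveI : IsDomain (Localization.Away ((p:ℕ):ℤ)) :=
    IsLocalization.isDomain_localization (powers_le_nonZeroDivisors_of_noZeroDivisors
      (Nat.prime_iff_prime_int.mp hp).ne_zero)
  have hP0 : algebraMap ℤ (Localization.Away ((p:ℕ):ℤ)) ((p:ℕ):ℤ) ≠ 0 := by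
    rw [show (0 : Localization.Away ((p:ℕ):ℤ)) = algebraMap ℤ _ 0 by simp]
    exact fun h => (Nat.prime_iff_prime_int.mp hp).ne_zero (hinj p hp h)
  have e1 : algebraMap ℤ (Localization.Away ((p:ℕ):ℤ)) ((p:ℕ):ℤ) * (n • uu p)
      = algebraMap ℤ (Localization.Away ((p:ℕ):ℤ)) ((p:ℕ):ℤ) * y := by
    rw [smul_eq, ← mul_assoc,
      mul_comm (algebraMap ℤ (Localization.Away ((p:ℕ):ℤ)) ((p:ℕ):ℤ))
        (algebraMap ℤ (Localization.Away ((p:ℕ):ℤ)) n), mul_assoc,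
      show algebraMap ℤ (Localization.Away ((p:ℕ):ℤ)) ((p:ℕ):ℤ) * uu p = 1 from
        IsLocalization.Away.mul_invSelf _, mul_one, hn, smul_eq]
  have key : y = n • uu p := (mul_left_cancel₀ hP0 e1).symm
  rw [key]
  exact ⟨n, by rw [map_smul]; rfl⟩

end PruferNotQPAux

namespace PruferNotQPAux

variable (p : ℕ)


lemma torsion_M (x : PruferModule p) : ∃ k : ℕ, (((p:ℕ):ℤ)^k) • x = 0 := by
  obtain ⟨y, rfl⟩ := Submodule.mkQ_surjective _ x
  obtain ⟨k, hk⟩ := torsion_LL p y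
  exact ⟨k, by rw [← map_smul, Submodule.mkQ_apply, Submodule.Quotient.mk_eq_zero]; exact hk⟩

lemma span_lemma (hp : p.Prime) (m : PruferModule p) (hm : m ≠ 0) :
    ∃ n : ℤ, n • m = cc p := by
  classical
  have hex : ∃ k : ℕ, (((p:ℕ):ℤ)^k) • m = 0 := torsion_M p m
  set k := Nat.find hex with hkdef
  have hk : (((p:ℕ):ℤ)^k) • m = 0 := Nat.find_spec hex
  have hkpos : k ≠ 0 := by
    intro h
    apply hm
    rw [h, pow_zero, one_smul] at hk
    exact hk
  set m' : PruferModule p := (((p:ℕ):ℤ)^(k-1)) • m with hm'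
  have hm'0 : m' ≠ 0 := Nat.find_min hex (by omega : k - 1 < k)
  have hpm' : ((p:ℕ):ℤ) • m' = 0 := by
    rw [hm', smul_smul, show ((p:ℕ):ℤ) * ((p:ℕ):ℤ)^(k-1) = ((p:ℕ):ℤ)^k by
      conv_rhs => rw [show k = (k-1)+1 by omega]
      ring]
    exact hk
  obtain ⟨r, hr⟩ := ker_struct p hp m' hpm'
  have hpr : ¬ (((p:ℕ):ℤ) ∣ r) := by
    rintro ⟨t, rfl⟩
    apply hm'0
    rw [hr, mul_comm, mul_smul, p_smul_cc, smul_zero]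
  obtain ⟨a, b, hab⟩ := ((Nat.prime_iff_prime_int.mp hp).coprime_iff_not_dvd.2 hpr)
  refine ⟨b * ((p:ℕ):ℤ)^(k-1), ?_⟩
  calc (b * ((p:ℕ):ℤ)^(k-1)) • m = b • m' := by rw [hm', mul_smul]
    _ = (b * r) • cc p := by rw [hr, smul_smul]
    _ = (1 - a * ((p:ℕ):ℤ)) • cc p := by rw [show b * r = 1 - a * ((p:ℕ):ℤ) by linarith]
    _ = cc p := by rw [sub_smul, one_smul, mul_smul, p_smul_cc, smul_zero, sub_zero]

end PruferNotQPAux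


/-- The Prüfer group `ℤ(p^∞)` is not a quasi-projective `ℤ`-module. -/
theorem pruferModule_not_quasiProjective (p : ℕ) (hp : p.Prime) :
    ¬ QuasiProjective ℤ (PruferModule p) := by
  intro hQP
  set g : PruferModule p →ₗ[ℤ] PruferModule p := ((p:ℕ):ℤ) • LinearMap.id with hg
  have hgapp : ∀ x, g x = ((p:ℕ):ℤ) • x := fun x => rfl
  have hsurj : Function.Surjective g := by
    intro x
    obtain ⟨y, rfl⟩ := Submodule.mkQ_surjective _ x
    refine ⟨(Submodule.span ℤ {(1 : Localization.Away ((p:ℕ):ℤ))}).mkQ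
      (PruferNotQPAux.uu p * y), ?_⟩
    rw [hgapp, ← map_smul]
    congr 1
    rw [PruferNotQPAux.smul_eq, ← mul_assoc, PruferNotQPAux.uu, IsLocalization.Away.mul_invSelf, one_mul]
  set N := LinearMap.ker g with hN
  set e0 := g.quotKerEquivOfSurjective hsurj with he0
  obtain ⟨f, hf⟩ := hQP N e0.symm.toLinearMap
  have hfapp : ∀ x, N.mkQ (f x) = e0.symm x := fun x => by
    have := congrFun (congrArg DFunLike.coe hf) x
    simpa using this
  have hcN : PruferNotQPAux.cc p ∈ N := by
    rw [hN, LinearMap.mem_ker, hgapp, PruferNotQPAux.p_smul_cc]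
  have hfc : f (PruferNotQPAux.cc p) ≠ 0 := by
    intro h
    have h1 : e0.symm (PruferNotQPAux.cc p) = 0 := by rw [← hfapp, h, map_zero]
    exact PruferNotQPAux.cc_ne_zero p hp (e0.symm.injective (by rw [h1, map_zero]))
  obtain ⟨n, hn⟩ := PruferNotQPAux.span_lemma p hp (f (PruferNotQPAux.cc p)) hfc
  have h2 : e0.symm (n • PruferNotQPAux.cc p) = 0 := by
    rw [← hfapp, map_smul, hn]
    exact (Submodule.Quotient.mk_eq_zero _).2 hcN
  have h3 : n • PruferNotQPAux.cc p = 0 :=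
    e0.symm.injective (by rw [h2, map_zero])
  apply PruferNotQPAux.cc_ne_zero p hp
  rw [← hn, ← map_smul, h3, map_zero]
end
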